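/- Let R be an oracle, n a natural number, and c : Fin (n+2) → ℚ a strictly monotone sequence of rationals (a finite partition c 0 < c 1 < ⋯ < c (n+1)) such that R (c 0) (c (n+1)) holds and ¬ R (c i) (c i) for every index i (no partition point, including the endpoints, is a Yes singleton). Then there is exactly one index i with 0 ≤ i ≤ n such that R (c i) (c (i+1)); that is, exactly one subinterval of the partition is a Yes interval. -/

import Mathlib

/-- An oracle is a rule on rational intervals satisfying the five oracle properties. -/
structure IsOracle (R : ℚ → ℚ → Prop) : Prop where
  consistent : ∀ a b c d : ℚ, c ≤ a → a ≤ b → b ≤ d → R a b → R c d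
  exists_yes : ∃ a b : ℚ, a ≤ b ∧ R a b
  separating : ∀ a b c : ℚ, a ≤ b → R a b → a < c → c < b →
    (R c c ∨ ¬ (R a c ↔ R c b))
  rooted : ∀ c d : ℚ, R c c → R d d → c = d
  closed : ∀ c : ℚ, (∀ a b : ℚ, a ≤ b → R a b → a ≤ c ∧ c ≤ b) → R c c

theorem partition_unique_yes (R : ℚ → ℚ → Prop) (hR : IsOracle R)
    (n : ℕ) (c : Fin (n + 2) → ℚ) (hmono : StrictMono c)
    (hYes : R (c 0) (c (Fin.last (n + 1))))
    (hsing : ∀ i : Fin (n + 2), ¬ R (c i) (c i)) :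
    ∃! i : Fin (n + 1), R (c i.castSucc) (c i.succ) := by
  -- work with a ℕ-indexed version of c
  set g : ℕ → ℚ := fun i => c ⟨min i (n + 1), by omega⟩ with hg
  have hgc : ∀ (i : ℕ) (h : i < n + 2), g i = c ⟨i, h⟩ := by
    intro i h
    simp only [hg]
    congr 1
    ext
    simp; omega
  -- existence, by induction
  have aux : ∀ d a b : ℕ, b = a + d + 1 → b ≤ n + 1 →
      R (g a) (g b) → ∃ i, a ≤ i ∧ i < b ∧ R (g i) (g (i + 1)) := by
    intro d
    induction d with
    | zero =>
      intro a b hb _ hyes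
      exact ⟨a, le_refl a, by omega, by rwa [hb] at hyes⟩
    | succ d ih =>
      intro a b hb hble hyes
      have hmono' : ∀ i j : ℕ, i < j → j ≤ n + 1 → g i < g j := by
        intro i j hij hj
        rw [hgc i (by omega), hgc j (by omega)]
        exact hmono (by simp [Fin.lt_def]; omega)
      have hab : g a ≤ g b := le_of_lt (hmono' a b (by omega) hble)
      have h1 : g a < g (a + 1) := hmono' a (a + 1) (by omega) (by omega)
      have h2 : g (a + 1) < g b := hmono' (a + 1) b (by omega) hble
      rcases hR.separating (g a) (g b) (g (a + 1)) hab hyes h1 h2 with hc | hxor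
      · rw [hgc (a + 1) (by omega)] at hc
        exact absurd hc (hsing _)
      · by_cases hL : R (g a) (g (a + 1))
        · exact ⟨a, le_refl a, by omega, hL⟩
        · have hRr : R (g (a + 1)) (g b) := by tauto
          obtain ⟨i, hi1, hi2, hi3⟩ := ih (a + 1) b (by omega) hble hRr
          exact ⟨i, by omega, hi2, hi3⟩
  have hyes' : R (g 0) (g (n + 1)) := by
    rw [hgc 0 (by omega), hgc (n + 1) (by omega)]
    convert hYes using 3 <;> simp
  obtain ⟨i, _, hi2, hi3⟩ := aux n 0 (n + 1) (by omega) (le_refl _) hyes'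
  rw [hgc i (by omega), hgc (i + 1) (by omega)] at hi3
  have hi3' : R (c (Fin.castSucc ⟨i, hi2⟩)) (c (Fin.succ ⟨i, hi2⟩)) := by
    convert hi3 using 2 <;> exact Fin.ext rfl
  refine ⟨⟨i, hi2⟩, hi3', ?_⟩
  -- uniqueness
  · intro j hj
    have key : ∀ p q : Fin (n + 1), p < q →
        R (c p.castSucc) (c p.succ) → R (c q.castSucc) (c q.succ) → False := by
      intro p q hpq hp hq
      have h1 : c p.castSucc < c p.succ := hmono (by simp [Fin.lt_def])
      have h2 : c p.succ ≤ c q.castSucc := by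
        apply hmono.monotone
        simp [Fin.le_def]
        omega
      have h3 : c q.castSucc < c q.succ := hmono (by simp [Fin.lt_def])
      have hbig : R (c p.castSucc) (c q.succ) :=
        hR.consistent _ _ _ _ (le_refl _) (le_of_lt h1) (by linarith) hp
      have hright : R (c p.succ) (c q.succ) :=
        hR.consistent _ _ _ _ h2 (le_of_lt h3) (le_refl _) hq
      rcases hR.separating (c p.castSucc) (c q.succ) (c p.succ) (by linarith) hbig h1
          (by linarith) with hc | hxor
      · exact hsing _ hc
      · exact hxor ⟨fun _ => hright, fun _ => hp⟩
    rcases lt_trichotomy j ⟨i, hi2⟩ with h | h | h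
    · exact absurd (key _ _ h hj hi3') id
    · exact h
    · exact absurd (key _ _ h hi3' hj) id
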